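/- Let u, ũ : ℝ² → ℝ be differentiable functions such that B(u,u) = B̃(ũ,u) and B(u,ũ) = B̃(ũ,ũ), and let M ≥ 0 satisfy ‖∇u(x)‖ ≤ M for almost every x ∈ ω. Then |∫_Ω a ‖∇u‖² dx − ∫_Ω ã ‖∇ũ‖² dx| ≤ |a₀ − a₁| · μ(ω)^{1/2} · (∫_ω ‖∇ũ‖² dx)^{1/2} · M. -/

import Mathlib

open MeasureTheory
open scoped RealInnerProductSpace

lemma measurable_gradient_aux (f : EuclideanSpace ℝ (Fin 2) → ℝ) :
    Measurable (gradient f) := by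
  unfold gradient
  exact (InnerProductSpace.toDual ℝ
    (EuclideanSpace ℝ (Fin 2))).symm.continuous.measurable.comp (measurable_fderiv ℝ f)

theorem stmt_2
    (Ω ω : Set (EuclideanSpace ℝ (Fin 2)))
    (hΩmeas : MeasurableSet Ω) (hΩfin : volume Ω < ⊤)
    (hωmeas : MeasurableSet ω) (hωsub : ω ⊆ Ω)
    (a₀ a₁ : ℝ) (a atil : EuclideanSpace ℝ (Fin 2) → ℝ)
    (hameas : Measurable a) (hatilmeas : Measurable atil)
    (ha_eq : ∀ x ∈ Ω \ ω, a x = atil x)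
    (ha_diff : ∀ x ∈ ω, atil x - a x = a₀ - a₁)
    (u util : EuclideanSpace ℝ (Fin 2) → ℝ)
    (hu : Differentiable ℝ u) (hutil : Differentiable ℝ util)
    (M : ℝ) (hM0 : 0 ≤ M)
    (hM : ∀ᵐ x ∂volume.restrict ω, ‖gradient u x‖ ≤ M)
    (hint1 : IntegrableOn (fun x => a x * ‖gradient u x‖ ^ 2) Ω)
    (hint2 : IntegrableOn (fun x => atil x * ‖gradient util x‖ ^ 2) Ω)
    (hint3 : IntegrableOn (fun x => atil x * ⟪gradient util x, gradient u x⟫) Ω)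
    (hint4 : IntegrableOn (fun x => a x * ⟪gradient u x, gradient util x⟫) Ω)
    (hint5 : IntegrableOn (fun x => ‖gradient util x‖ ^ 2) ω)
    (hB1 : (∫ x in Ω, a x * ‖gradient u x‖ ^ 2)
        = ∫ x in Ω, atil x * ⟪gradient util x, gradient u x⟫)
    (hB2 : (∫ x in Ω, a x * ⟪gradient u x, gradient util x⟫)
        = ∫ x in Ω, atil x * ‖gradient util x‖ ^ 2) :
    |(∫ x in Ω, a x * ‖gradient u x‖ ^ 2) - ∫ x in Ω, atil x * ‖gradient util x‖ ^ 2|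
      ≤ |a₀ - a₁| * Real.sqrt ((volume ω).toReal)
          * Real.sqrt (∫ x in ω, ‖gradient util x‖ ^ 2) * M := by
  set f := gradient u with hf
  set g := gradient util with hg
  have hfm : Measurable f := measurable_gradient_aux u
  have hgm : Measurable g := measurable_gradient_aux util
  -- finite measure on ω
  have hωfin : volume ω < ⊤ := lt_of_le_of_lt (measure_mono hωsub) hΩfin
  haveI : IsFiniteMeasure (volume.restrict ω) :=
    ⟨by rwa [Measure.restrict_apply_univ]⟩
  -- rewrite hB2 using symmetry of inner product
  have hB2' : (∫ x in Ω, a x * ⟪g x, f x⟫) = ∫ x in Ω, atil x * ‖g x‖ ^ 2 := by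
    rw [← hB2]
    congr 1; ext x; rw [real_inner_comm]
  have hint4' : IntegrableOn (fun x => a x * ⟪g x, f x⟫) Ω := by
    have : (fun x => a x * ⟪g x, f x⟫) = fun x => a x * ⟪f x, g x⟫ := by
      ext x; rw [real_inner_comm]
    rw [this]; exact hint4
  -- the difference equals ∫_Ω (atil - a) ⟪g, f⟫
  have key : (∫ x in Ω, a x * ‖f x‖ ^ 2) - (∫ x in Ω, atil x * ‖g x‖ ^ 2)
      = ∫ x in Ω, (atil x - a x) * ⟪g x, f x⟫ := by
    rw [hB1, ← hB2']
    rw [← integral_sub hint3 hint4']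
    congr 1; ext x; ring
  -- reduce integral over Ω to integral over ω
  have hintΩ : IntegrableOn (fun x => (atil x - a x) * ⟪g x, f x⟫) Ω := by
    have : (fun x => (atil x - a x) * ⟪g x, f x⟫)
        = fun x => atil x * ⟪g x, f x⟫ - a x * ⟪g x, f x⟫ := by ext x; ring
    rw [this]; exact hint3.sub hint4'
  have hsplit : (∫ x in Ω, (atil x - a x) * ⟪g x, f x⟫)
      = ∫ x in ω, (atil x - a x) * ⟪g x, f x⟫ := by
    rw [← integral_inter_add_diff hωmeas hintΩ]
    have h1 : Ω ∩ ω = ω := Set.inter_eq_self_of_subset_right hωsub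
    have h2 : (∫ x in Ω \ ω, (atil x - a x) * ⟪g x, f x⟫) = 0 := by
      apply setIntegral_eq_zero_of_forall_eq_zero
      intro x hx
      rw [ha_eq x hx]; ring
    rw [h1, h2, add_zero]
  have hconst : (∫ x in ω, (atil x - a x) * ⟪g x, f x⟫)
      = (a₀ - a₁) * ∫ x in ω, ⟪g x, f x⟫ := by
    rw [← integral_const_mul]
    apply setIntegral_congr_fun hωmeas
    intro x hx
    simp only [ha_diff x hx]
  rw [key, hsplit, hconst, abs_mul]
  -- now bound |∫_ω ⟪g, f⟫|
  have hg1 : Integrable (fun x => ‖g x‖) (volume.restrict ω) := by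
    have h2 : MemLp (fun x => ‖g x‖) 2 (volume.restrict ω) :=
      (memLp_two_iff_integrable_sq hgm.norm.aestronglyMeasurable).2 hint5
    exact h2.integrable (by norm_num)
  have hdom : Integrable (fun x => ‖g x‖ * M) (volume.restrict ω) := hg1.mul_const M
  have hinner_int : Integrable (fun x => ⟪g x, f x⟫) (volume.restrict ω) := by
    apply Integrable.mono' hdom
    · exact (hgm.inner hfm).aestronglyMeasurable
    · filter_upwards [hM] with x hx
      calc ‖⟪g x, f x⟫‖ ≤ ‖g x‖ * ‖f x‖ := norm_inner_le_norm _ _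
        _ ≤ ‖g x‖ * M := by
            exact mul_le_mul_of_nonneg_left hx (norm_nonneg _)
  have step1 : |∫ x in ω, ⟪g x, f x⟫| ≤ ∫ x in ω, ‖g x‖ * M := by
    calc |∫ x in ω, ⟪g x, f x⟫| ≤ ∫ x in ω, ‖⟪g x, f x⟫‖ := by
          rw [← Real.norm_eq_abs]; exact norm_integral_le_integral_norm _
      _ ≤ ∫ x in ω, ‖g x‖ * M := by
          apply integral_mono_ae hinner_int.norm hdom
          filter_upwards [hM] with x hx
          calc ‖⟪g x, f x⟫‖ ≤ ‖g x‖ * ‖f x‖ := norm_inner_le_norm _ _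
            _ ≤ ‖g x‖ * M := mul_le_mul_of_nonneg_left hx (norm_nonneg _)
  -- Cauchy-Schwarz: ∫ ‖g‖ ≤ sqrt(μ ω) * sqrt(∫ ‖g‖²)
  have hCS : (∫ x in ω, ‖g x‖)
      ≤ Real.sqrt ((volume ω).toReal) * Real.sqrt (∫ x in ω, ‖g x‖ ^ 2) := by
    have hpq : (2 : ℝ).HolderConjugate 2 := Real.holderConjugate_iff.2 ⟨one_lt_two, by norm_num⟩
    have h2 : MemLp (fun x => ‖g x‖) (ENNReal.ofReal 2) (volume.restrict ω) := by
      rw [show ENNReal.ofReal 2 = 2 by norm_num]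
      exact (memLp_two_iff_integrable_sq hgm.norm.aestronglyMeasurable).2 hint5
    have hone : MemLp (fun _ : EuclideanSpace ℝ (Fin 2) => (1 : ℝ))
        (ENNReal.ofReal 2) (volume.restrict ω) := memLp_const 1
    have := integral_mul_le_Lp_mul_Lq_of_nonneg hpq
      (Filter.Eventually.of_forall fun x => norm_nonneg (g x))
      (Filter.Eventually.of_forall fun _ => zero_le_one) h2 hone
    simp only [mul_one, one_pow] at this
    have heq1 : (∫ x in ω, (1 : ℝ) ^ (2:ℝ)) = (volume ω).toReal := by
      simp [Measure.restrict_apply_univ, Measure.real]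
    have heq2 : (∫ x in ω, ‖g x‖ ^ (2:ℝ)) = ∫ x in ω, ‖g x‖ ^ 2 := by
      congr 1; ext x
      rw [← Real.rpow_natCast ‖g x‖ 2]; norm_num
    rw [heq1, heq2] at this
    calc (∫ x in ω, ‖g x‖)
        ≤ (∫ x in ω, ‖g x‖ ^ 2) ^ (1/2 : ℝ) * (volume ω).toReal ^ (1/2 : ℝ) := by
          simpa using this
      _ = Real.sqrt ((volume ω).toReal) * Real.sqrt (∫ x in ω, ‖g x‖ ^ 2) := by
          rw [Real.sqrt_eq_rpow, Real.sqrt_eq_rpow]; ring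
  calc |a₀ - a₁| * |∫ x in ω, ⟪g x, f x⟫|
      ≤ |a₀ - a₁| * ∫ x in ω, ‖g x‖ * M :=
        mul_le_mul_of_nonneg_left step1 (abs_nonneg _)
    _ = |a₀ - a₁| * (∫ x in ω, ‖g x‖) * M := by rw [integral_mul_const]; ring
    _ ≤ |a₀ - a₁| * (Real.sqrt ((volume ω).toReal)
          * Real.sqrt (∫ x in ω, ‖g x‖ ^ 2)) * M := by
        apply mul_le_mul_of_nonneg_right _ hM0
        exact mul_le_mul_of_nonneg_left hCS (abs_nonneg _)
    _ = |a₀ - a₁| * Real.sqrt ((volume ω).toReal)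
          * Real.sqrt (∫ x in ω, ‖g x‖ ^ 2) * M := by ring
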